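/- Let F be a field, X = X_1 ⊔ … ⊔ X_q a finite set of n variables partitioned into q disjoint blocks, and for each j ∈ [q] let g_j ∈ F[X_j] be a multilinear polynomial. Let (Y, Z) be any partition of X and set Y_j = Y ∩ X_j, Z_j = Z ∩ X_j. Then rank(M_{Y,Z}(∏_{j=1}^q g_j)) ≤ 2^{(n − ∑_{j=1}^q | |Y_j| − |Z_j| |)/2}. -/

import Mathlib

set_option maxHeartbeats 1000000
set_option linter.unusedSectionVars false


open MvPolynomial

/-- The partial derivative matrix `M_{Y,Z}(f)` of a multilinear polynomial `f` with
respect to a partition `(Y, Z)` of the variables: rows are indexed by subsets `A ⊆ Y`,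
columns by subsets `B ⊆ Z`, and the `(A, B)` entry is the coefficient in `f` of the
monomial `∏_{y ∈ A} y · ∏_{z ∈ B} z`. -/
noncomputable def pdMatrix {F : Type*} [Field F] {V : Type*} [Fintype V] [DecidableEq V]
    (f : MvPolynomial V F) (Y Z : Finset V) :
    Matrix {A : Finset V // A ⊆ Y} {B : Finset V // B ⊆ Z} F :=
  fun A B => f.coeff ((∑ v ∈ A.1, Finsupp.single v 1) + ∑ v ∈ B.1, Finsupp.single v 1)

section Aux

variable {F : Type*} [Field F] {V : Type*} [Fintype V] [DecidableEq V]

/-- the `0/1` monomial exponent vector of a finset -/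
noncomputable def msum (A : Finset V) : V →₀ ℕ := ∑ v ∈ A, Finsupp.single v 1

lemma msum_apply (A : Finset V) (w : V) : msum A w = if w ∈ A then 1 else 0 := by
  classical
  rw [msum, Finsupp.finset_sum_apply]
  simp [Finsupp.single_apply]

lemma msum_split (S A : Finset V) : msum A = msum (A ∩ S) + msum (A \ S) := by
  ext w
  simp only [Finsupp.add_apply, msum_apply, Finset.mem_inter, Finset.mem_sdiff]
  by_cases h : w ∈ S <;> by_cases h' : w ∈ A <;> simp [h, h']

lemma msum_eq_zero_iff (A : Finset V) : msum A = 0 ↔ A = ∅ := by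
  constructor
  · intro h
    by_contra hA
    obtain ⟨a, ha⟩ := Finset.nonempty_iff_ne_empty.2 hA
    have := congrArg (fun f : V →₀ ℕ => f a) h
    simp [msum_apply, ha] at this
  · rintro rfl; simp [msum]

lemma support_msum_subset (A : Finset V) : (msum A).support ⊆ A := by
  intro w hw
  rw [Finsupp.mem_support_iff, msum_apply] at hw
  by_contra h; simp [h] at hw

/-- The key splitting lemma: the partial derivative matrix of a product of two
polynomials in disjoint variable sets factors entrywise. -/
lemma pdMatrix_mul_split (S : Finset V) (f g : MvPolynomial V F)
    (hf : f.vars ⊆ S) (hg : Disjoint g.vars S) (Y Z : Finset V)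
    (A : {A : Finset V // A ⊆ Y}) (B : {B : Finset V // B ⊆ Z}) :
    pdMatrix (f * g) Y Z A B =
      pdMatrix f (Y ∩ S) (Z ∩ S)
          ⟨A.1 ∩ S, Finset.inter_subset_inter A.2 le_rfl⟩
          ⟨B.1 ∩ S, Finset.inter_subset_inter B.2 le_rfl⟩ *
      pdMatrix g (Y \ S) (Z \ S)
          ⟨A.1 \ S, Finset.sdiff_subset_sdiff A.2 le_rfl⟩
          ⟨B.1 \ S, Finset.sdiff_subset_sdiff B.2 le_rfl⟩ := by
  classical
  show (f * g).coeff (msum A.1 + msum B.1) =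
    f.coeff (msum (A.1 ∩ S) + msum (B.1 ∩ S)) * g.coeff (msum (A.1 \ S) + msum (B.1 \ S))
  set μ : V →₀ ℕ := msum (A.1 ∩ S) + msum (B.1 ∩ S) with hμ
  set ν : V →₀ ℕ := msum (A.1 \ S) + msum (B.1 \ S) with hν
  have hd : msum A.1 + msum B.1 = μ + ν := by
    rw [hμ, hν, msum_split S A.1, msum_split S B.1]; abel
  have hμS : ∀ w, w ∉ S → μ w = 0 := by
    intro w hw
    simp only [hμ, Finsupp.add_apply, msum_apply, Finset.mem_inter]
    simp [hw]
  have hνS : ∀ w, w ∈ S → ν w = 0 := by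
    intro w hw
    simp only [hν, Finsupp.add_apply, msum_apply, Finset.mem_sdiff]
    simp [hw]
  rw [hd, coeff_mul]
  apply Finset.sum_eq_single (μ, ν)
  · rintro ⟨u, v⟩ huv hne
    rw [Finset.HasAntidiagonal.mem_antidiagonal] at huv
    by_contra h
    have hfu : f.coeff u ≠ 0 := fun h' => h (by simp [h'])
    have hgv : g.coeff v ≠ 0 := fun h' => h (by simp [h'])
    have huS : ∀ w, w ∉ S → u w = 0 := by
      intro w hw
      by_contra h'
      exact hw (hf ((mem_vars w).2 ⟨u, mem_support_iff.2 hfu, Finsupp.mem_support_iff.2 h'⟩))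
    have hvS : ∀ w, w ∈ S → v w = 0 := by
      intro w hw
      by_contra h'
      exact (Finset.disjoint_left.1 hg)
        ((mem_vars w).2 ⟨v, mem_support_iff.2 hgv, Finsupp.mem_support_iff.2 h'⟩) hw
    have hu : u = μ := by
      ext w
      have := congrArg (fun f : V →₀ ℕ => f w) huv
      simp only [Finsupp.add_apply] at this
      by_cases hw : w ∈ S
      · rw [hvS w hw, hνS w hw] at this; omega
      · rw [huS w hw, hμS w hw]
    have hv : v = ν := by
      subst hu
      exact add_left_cancel huv
    exact hne (by rw [hu, hv])
  · intro h
    exact absurd (Finset.HasAntidiagonal.mem_antidiagonal.2 (rfl : μ + ν = μ + ν)) h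

lemma card_subsets (W : Finset V) :
    Fintype.card {A : Finset V // A ⊆ W} = 2 ^ W.card := by
  classical
  rw [Fintype.card_congr (Equiv.subtypeEquivRight
    (fun A => (Finset.mem_powerset (s := A) (t := W)).symm)),
    Fintype.card_coe, Finset.card_powerset]

/-- every matrix factors through `Fin (min (#rows) (#cols))` trivially -/
lemma exists_factor_min {m n : Type*} [Fintype m] [Fintype n] [DecidableEq m] [DecidableEq n]
    (M : Matrix m n F) :
    ∃ (P : Matrix m (Fin (min (Fintype.card m) (Fintype.card n))) F)
      (Q : Matrix (Fin (min (Fintype.card m) (Fintype.card n))) n F), M = P * Q := by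
  classical
  rcases le_total (Fintype.card m) (Fintype.card n) with h | h
  · have hk : min (Fintype.card m) (Fintype.card n) = Fintype.card m := min_eq_left h
    let e : m ≃ Fin (min (Fintype.card m) (Fintype.card n)) :=
      (Fintype.equivFin m).trans (finCongr hk.symm)
    refine ⟨Matrix.of fun a c => if e a = c then 1 else 0, Matrix.of fun c b => M (e.symm c) b, ?_⟩
    ext a b
    rw [Matrix.mul_apply]
    simp [Finset.sum_ite_eq, e]
  · have hk : min (Fintype.card m) (Fintype.card n) = Fintype.card n := min_eq_right h
    let e : n ≃ Fin (min (Fintype.card m) (Fintype.card n)) :=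
      (Fintype.equivFin n).trans (finCongr hk.symm)
    refine ⟨Matrix.of fun a c => M a (e.symm c), Matrix.of fun c b => if c = e b then 1 else 0, ?_⟩
    ext a b
    rw [Matrix.mul_apply]
    simp [Finset.sum_ite_eq', e]

/-- combining factorizations across an entrywise (Kronecker-style) product -/
lemma factor_mul {m n m₁ n₁ m₂ n₂ : Type*} [Fintype m] [Fintype n] [Fintype m₁] [Fintype n₁]
    [Fintype m₂] [Fintype n₂]
    (M : Matrix m n F) (M₁ : Matrix m₁ n₁ F) (M₂ : Matrix m₂ n₂ F)
    (r₁ : m → m₁) (r₂ : m → m₂) (c₁ : n → n₁) (c₂ : n → n₂)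
    (h : ∀ a b, M a b = M₁ (r₁ a) (c₁ b) * M₂ (r₂ a) (c₂ b))
    {k₁ k₂ : ℕ} (P₁ : Matrix m₁ (Fin k₁) F) (Q₁ : Matrix (Fin k₁) n₁ F) (h₁ : M₁ = P₁ * Q₁)
    (P₂ : Matrix m₂ (Fin k₂) F) (Q₂ : Matrix (Fin k₂) n₂ F) (h₂ : M₂ = P₂ * Q₂) :
    ∃ (P : Matrix m (Fin (k₁ * k₂)) F) (Q : Matrix (Fin (k₁ * k₂)) n F), M = P * Q := by
  classical
  refine ⟨Matrix.of fun a c => P₁ (r₁ a) (finProdFinEquiv.symm c).1 * P₂ (r₂ a) (finProdFinEquiv.symm c).2,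
    Matrix.of fun c b => Q₁ (finProdFinEquiv.symm c).1 (c₁ b) * Q₂ (finProdFinEquiv.symm c).2 (c₂ b), ?_⟩
  ext a b
  rw [h a b, h₁, h₂, Matrix.mul_apply, Matrix.mul_apply, Matrix.mul_apply,
    Finset.sum_mul_sum]
  simp only [Matrix.of_apply]
  rw [Fintype.sum_equiv finProdFinEquiv.symm _
    (fun p : Fin k₁ × Fin k₂ =>
      P₁ (r₁ a) p.1 * P₂ (r₂ a) p.2 * (Q₁ p.1 (c₁ b) * Q₂ p.2 (c₂ b)))
    (fun c => rfl), Fintype.sum_prod_type]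
  apply Finset.sum_congr rfl
  intro i _
  apply Finset.sum_congr rfl
  intro jj _
  ring

lemma min_pow (a b : ℕ) : min (2 ^ a) (2 ^ b) = 2 ^ min a b := by
  rcases le_total a b with h | h
  · rw [min_eq_left h, min_eq_left (Nat.pow_le_pow_right (by norm_num) h)]
  · rw [min_eq_right h, min_eq_right (Nat.pow_le_pow_right (by norm_num) h)]

/-- The main induction: the partial derivative matrix of a product of polynomials in
pairwise disjoint variable blocks admits a factorization through a small index set. -/
lemma key {q : ℕ} (Xb : Fin q → Finset V)
    (hXdisj : ∀ j j', j ≠ j' → Disjoint (Xb j) (Xb j'))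
    (g : Fin q → MvPolynomial V F) (hvars : ∀ j, (g j).vars ⊆ Xb j)
    (s : Finset (Fin q)) :
    ∀ (Y Z : Finset V),
      ∃ (k : ℕ) (P : Matrix {A : Finset V // A ⊆ Y} (Fin k) F)
        (Q : Matrix (Fin k) {B : Finset V // B ⊆ Z} F),
        k ≤ (∏ j ∈ s, 2 ^ min (Y ∩ Xb j).card (Z ∩ Xb j).card) ∧
        pdMatrix (∏ j ∈ s, g j) Y Z = P * Q := by
  classical
  induction s using Finset.induction_on with
  | empty =>
    intro Y Z
    refine ⟨1, Matrix.of fun A _ => if A.1 = ∅ then 1 else 0, Matrix.of fun _ B => if B.1 = ∅ then 1 else 0,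
      by simp, ?_⟩
    ext A B
    rw [Matrix.mul_apply]
    rw [Fin.sum_univ_one]
    show (1 : MvPolynomial V F).coeff (msum A.1 + msum B.1) = _
    rw [coeff_one]
    have h0 : msum A.1 + msum B.1 = 0 ↔ A.1 = ∅ ∧ B.1 = ∅ := by
      constructor
      · intro h
        constructor
        · rw [← msum_eq_zero_iff]
          ext w
          have := congrArg (fun f : V →₀ ℕ => f w) h
          simp only [Finsupp.add_apply, Finsupp.coe_zero, Pi.zero_apply] at this
          simp only [Finsupp.coe_zero, Pi.zero_apply]
          omega
        · rw [← msum_eq_zero_iff]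
          ext w
          have := congrArg (fun f : V →₀ ℕ => f w) h
          simp only [Finsupp.add_apply, Finsupp.coe_zero, Pi.zero_apply] at this
          simp only [Finsupp.coe_zero, Pi.zero_apply]
          omega
      · rintro ⟨h1, h2⟩
        rw [h1, h2]
        simp [msum]
    have h0' : ((0 : V →₀ ℕ) = msum ↑A + msum ↑B) ↔ (A.1 = ∅ ∧ B.1 = ∅) :=
      eq_comm.trans h0
    rw [if_congr h0' rfl rfl]
    by_cases hA : A.1 = ∅ <;> by_cases hB : B.1 = ∅ <;> simp [hA, hB]
  | @insert j s hj ih =>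
    intro Y Z
    set S := Xb j with hS
    have hsplit := pdMatrix_mul_split S (g j) (∏ i ∈ s, g i) (hvars j)
      (by
        refine Finset.disjoint_left.2 fun v hv hvS => ?_
        obtain ⟨i, hi, hvi⟩ := Finset.mem_biUnion.1 (vars_prod (s := s) g hv)
        exact Finset.disjoint_left.1 (hXdisj i j (fun h => hj (h ▸ hi))) (hvars i hvi) hvS)
      Y Z
    obtain ⟨P₁, Q₁, hPQ₁⟩ := exists_factor_min (F := F) (pdMatrix (g j) (Y ∩ S) (Z ∩ S))
    obtain ⟨k₂, P₂, Q₂, hk₂, hPQ₂⟩ := ih (Y \ S) (Z \ S)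
    have hprod : (∏ i ∈ insert j s, g i) = g j * ∏ i ∈ s, g i := Finset.prod_insert hj
    obtain ⟨P, Q, hPQ⟩ := factor_mul (pdMatrix (∏ i ∈ insert j s, g i) Y Z)
      (pdMatrix (g j) (Y ∩ S) (Z ∩ S)) (pdMatrix (∏ i ∈ s, g i) (Y \ S) (Z \ S))
      (fun A => ⟨A.1 ∩ S, Finset.inter_subset_inter A.2 le_rfl⟩)
      (fun A => ⟨A.1 \ S, Finset.sdiff_subset_sdiff A.2 le_rfl⟩)
      (fun B => ⟨B.1 ∩ S, Finset.inter_subset_inter B.2 le_rfl⟩)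
      (fun B => ⟨B.1 \ S, Finset.sdiff_subset_sdiff B.2 le_rfl⟩)
      (fun A B => by rw [hprod]; exact hsplit A B)
      P₁ Q₁ hPQ₁ P₂ Q₂ hPQ₂
    refine ⟨_, P, Q, ?_, hPQ⟩
    rw [Finset.prod_insert hj]
    have hc : min (Fintype.card {A : Finset V // A ⊆ Y ∩ S})
        (Fintype.card {B : Finset V // B ⊆ Z ∩ S})
        = 2 ^ min (Y ∩ Xb j).card (Z ∩ Xb j).card := by
      rw [card_subsets, card_subsets, min_pow, hS]
    have hrest : ∀ i ∈ s, ((Y \ S) ∩ Xb i).card = (Y ∩ Xb i).card ∧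
        ((Z \ S) ∩ Xb i).card = (Z ∩ Xb i).card := by
      intro i hi
      have hij : Disjoint (Xb i) S := hXdisj i j (fun h => hj (h ▸ hi))
      constructor <;>
      · congr 1
        ext v
        simp only [Finset.mem_inter, Finset.mem_sdiff]
        exact ⟨fun ⟨⟨h1, _⟩, h3⟩ => ⟨h1, h3⟩,
          fun ⟨h1, h3⟩ => ⟨⟨h1, fun hv => Finset.disjoint_left.1 hij h3 hv⟩, h3⟩⟩
    calc min (Fintype.card {A : Finset V // A ⊆ Y ∩ S})
          (Fintype.card {B : Finset V // B ⊆ Z ∩ S}) * k₂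
        ≤ 2 ^ min (Y ∩ Xb j).card (Z ∩ Xb j).card *
            ∏ i ∈ s, 2 ^ min ((Y \ S) ∩ Xb i).card ((Z \ S) ∩ Xb i).card := by
          rw [hc]; exact Nat.mul_le_mul_left _ hk₂
      _ = 2 ^ min (Y ∩ Xb j).card (Z ∩ Xb j).card *
            ∏ i ∈ s, 2 ^ min (Y ∩ Xb i).card (Z ∩ Xb i).card := by
          congr 1
          apply Finset.prod_congr rfl
          intro i hi
          rw [(hrest i hi).1, (hrest i hi).2]

end Aux

/-- If the `n` variables are partitioned into blocks `X_1 ⊔ ⋯ ⊔ X_q` and each `g_j` is a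
multilinear polynomial in the variables of `X_j`, then for any partition `(Y, Z)` of the
variables, `rank M_{Y,Z}(∏_j g_j) ≤ 2^{(n - ∑_j ||Y ∩ X_j| - |Z ∩ X_j||)/2}`. -/
theorem rank_pdMatrix_prod_le
    {F : Type*} [Field F] {V : Type*} [Fintype V] [DecidableEq V] (q : ℕ)
    (Xb : Fin q → Finset V)
    (hXdisj : ∀ j j', j ≠ j' → Disjoint (Xb j) (Xb j'))
    (hXcover : Finset.univ.biUnion Xb = (Finset.univ : Finset V))
    (g : Fin q → MvPolynomial V F)
    (hml : ∀ j v, (g j).degreeOf v ≤ 1)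
    (hvars : ∀ j, (g j).vars ⊆ Xb j)
    (Y Z : Finset V) (hYZdisj : Disjoint Y Z) (hYZcover : Y ∪ Z = Finset.univ) :
    (pdMatrix (∏ j, g j) Y Z).rank ≤
      2 ^ ((Fintype.card V -
        ∑ j, (((Y ∩ Xb j).card : ℤ) - ((Z ∩ Xb j).card : ℤ)).natAbs) / 2) := by
  classical
  obtain ⟨k, P, Q, hk, hPQ⟩ := key Xb hXdisj g hvars Finset.univ Y Z
  have hrank : (pdMatrix (∏ j, g j) Y Z).rank ≤ k := by
    rw [hPQ]
    calc (P * Q).rank ≤ P.rank := Matrix.rank_mul_le_left P Q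
      _ ≤ Fintype.card (Fin k) := Matrix.rank_le_card_width P
      _ = k := Fintype.card_fin k
  -- arithmetic
  set a : Fin q → ℕ := fun j => (Y ∩ Xb j).card with ha
  set b : Fin q → ℕ := fun j => (Z ∩ Xb j).card with hb
  have hab : ∀ j, a j + b j = (Xb j).card := by
    intro j
    have hdisj : Disjoint (Y ∩ Xb j) (Z ∩ Xb j) :=
      hYZdisj.mono (Finset.inter_subset_left) (Finset.inter_subset_left)
    have hun : (Y ∩ Xb j) ∪ (Z ∩ Xb j) = Xb j := by
      rw [← Finset.union_inter_distrib_right, hYZcover, Finset.univ_inter]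
    rw [ha, hb]
    rw [← Finset.card_union_of_disjoint hdisj, hun]
  have hn : ∑ j, (Xb j).card = Fintype.card V := by
    rw [← Finset.card_biUnion (fun i _ i' _ h => hXdisj i i' h), hXcover, Finset.card_univ]
  have habd : ∀ j, a j + b j = (((a j : ℤ) - (b j : ℤ)).natAbs) + 2 * min (a j) (b j) := by
    intro j; omega
  have hsum : Fintype.card V =
      (∑ j, (((a j : ℤ) - (b j : ℤ)).natAbs)) + 2 * ∑ j, min (a j) (b j) := by
    rw [← hn, Finset.mul_sum, ← Finset.sum_add_distrib]
    exact Finset.sum_congr rfl fun j _ => (hab j).symm.trans (habd j)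
  have hdiv : (Fintype.card V - ∑ j, (((a j : ℤ) - (b j : ℤ)).natAbs)) / 2
      = ∑ j, min (a j) (b j) := by omega
  calc (pdMatrix (∏ j, g j) Y Z).rank ≤ k := hrank
    _ ≤ ∏ j, 2 ^ min (a j) (b j) := hk
    _ = 2 ^ ∑ j, min (a j) (b j) := Finset.prod_pow_eq_pow_sum _ _ _
    _ = _ := by rw [hdiv]
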